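/- Let H and F be real inner product spaces with dim H = 4 and dim F = 2, and let V = H ⊕ F with the direct-sum inner product. Let J_H and J_F be orthogonal complex structures on H and F, with Hermitian 2-forms ω_H and ω_F pulled back to V via the orthogonal projections, and set ω := ω_H + ω_F. Let η be a 2-form on H, pulled back to V, whose inner product with ω_H vanishes: Σ_{1 ≤ i < j ≤ 4} ω_H(f_i,f_j) η(f_i,f_j) = 0 for an orthonormal basis (f₁,…,f₄) of H. Let γ : V → ℝ be a linear functional vanishing on H. Then the contraction ω ⌟ (η ∧ γ) = 0, where η ∧ γ is the alternating 3-form (η ∧ γ)(u,v,w) = η(u,v)γ(w) − η(u,w)γ(v) + η(v,w)γ(u). -/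

import Mathlib

open scoped InnerProductSpace
open Finset

private lemma aux_pair_sum {n : ℕ} (a : Fin n → Fin n → ℝ) (hdiag : ∀ i, a i i = 0) :
    ∑ i, ∑ j ∈ Ioi i, (a i j + a j i) = ∑ i, ∑ j, a i j := by
  have swap : ∑ i, ∑ j ∈ Ioi i, a j i = ∑ i, ∑ j ∈ Iio i, a i j := by
    rw [Finset.sum_sigma', Finset.sum_sigma']
    refine Finset.sum_nbij' (fun p => ⟨p.2, p.1⟩) (fun p => ⟨p.2, p.1⟩) ?_ ?_ ?_ ?_ ?_ <;>
      simp [Finset.mem_sigma, Finset.mem_Ioi, Finset.mem_Iio]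
  have split : ∀ i : Fin n, ∑ j, a i j = ∑ j ∈ Iio i, a i j + ∑ j ∈ Ioi i, a i j := by
    intro i
    rw [← Finset.sum_filter_add_sum_filter_not univ (fun j => j < i)]
    congr 1
    · congr 1; ext j; simp
    · rw [show (univ.filter fun j => ¬ j < i) = Ici i by ext j; simp [not_lt],
        Finset.Ici_eq_cons_Ioi, Finset.sum_cons, hdiag, zero_add]
  simp_rw [Finset.sum_add_distrib, swap, split]
  rw [Finset.sum_add_distrib, add_comm]

private lemma aux_onb_trace {V : Type*} [NormedAddCommGroup V] [InnerProductSpace ℝ V]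
    {ι : Type*} [Fintype ι] [DecidableEq ι] (b : OrthonormalBasis ι ℝ V) (M : V →ₗ[ℝ] V) :
    LinearMap.trace ℝ V M = ∑ i, ⟪b i, M (b i)⟫_ℝ := by
  rw [LinearMap.trace_eq_matrix_trace ℝ b.toBasis, Matrix.trace]
  refine Finset.sum_congr rfl fun i _ => ?_
  simp [Matrix.diag, LinearMap.toMatrix_apply, OrthonormalBasis.coe_toBasis_repr_apply,
    OrthonormalBasis.repr_apply_apply]

theorem contraction_sum_hermitian_wedge_primitive_two_form_fiber_one_form
    {H F : Type*} [NormedAddCommGroup H] [InnerProductSpace ℝ H]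
    [NormedAddCommGroup F] [InnerProductSpace ℝ F]
    (hH : Module.finrank ℝ H = 4) (hF : Module.finrank ℝ F = 2)
    (JH : H →ₗ[ℝ] H)
    (hJH2 : ∀ h : H, JH (JH h) = -h)
    (hJHorth : ∀ h h' : H, ⟪JH h, JH h'⟫_ℝ = ⟪h, h'⟫_ℝ)
    (JF : F →ₗ[ℝ] F)
    (hJF2 : ∀ f : F, JF (JF f) = -f)
    (hJForth : ∀ f f' : F, ⟪JF f, JF f'⟫_ℝ = ⟪f, f'⟫_ℝ)
    (ωH ωF ω : WithLp 2 (H × F) → WithLp 2 (H × F) → ℝ)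
    (hωH : ∀ u v : WithLp 2 (H × F),
      ωH u v = ⟪JH (WithLp.equiv 2 (H × F) u).1, (WithLp.equiv 2 (H × F) v).1⟫_ℝ)
    (hωF : ∀ u v : WithLp 2 (H × F),
      ωF u v = ⟪JF (WithLp.equiv 2 (H × F) u).2, (WithLp.equiv 2 (H × F) v).2⟫_ℝ)
    (hω : ∀ u v : WithLp 2 (H × F), ω u v = ωH u v + ωF u v)
    (η₀ : H →ₗ[ℝ] H →ₗ[ℝ] ℝ)
    (hη₀alt : ∀ h : H, η₀ h h = 0)
    (η : WithLp 2 (H × F) → WithLp 2 (H × F) → ℝ)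
    (hη : ∀ u v : WithLp 2 (H × F),
      η u v = η₀ (WithLp.equiv 2 (H × F) u).1 (WithLp.equiv 2 (H × F) v).1)
    (f : OrthonormalBasis (Fin 4) ℝ H)
    (hperp : ∑ i : Fin 4, ∑ j ∈ Finset.Ioi i, ⟪JH (f i), f j⟫_ℝ * η₀ (f i) (f j) = 0)
    (γ : WithLp 2 (H × F) →ₗ[ℝ] ℝ)
    (hγ : ∀ h : H, γ ((WithLp.equiv 2 (H × F)).symm (h, 0)) = 0)
    (e : OrthonormalBasis (Fin 6) ℝ (WithLp 2 (H × F)))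
    (v : WithLp 2 (H × F)) :
    ∑ i : Fin 6, ∑ j ∈ Finset.Ioi i,
      ω (e i) (e j) *
        (η (e i) (e j) * γ v - η (e i) v * γ (e j) + η (e j) v * γ (e i)) =
      0 := by
  -- the complex structure on V = WithLp 2 (H × F)
  set K : WithLp 2 (H × F) →ₗ[ℝ] WithLp 2 (H × F) :=
    (WithLp.linearEquiv 2 ℝ (H × F)).symm.toLinearMap ∘ₗ (JH.prodMap JF) ∘ₗ
      (WithLp.linearEquiv 2 ℝ (H × F)).toLinearMap with hKdef
  have hKapp : ∀ u : WithLp 2 (H × F),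
      K u = (WithLp.equiv 2 (H × F)).symm (JH (WithLp.equiv 2 (H × F) u).1,
        JF (WithLp.equiv 2 (H × F) u).2) := fun u => rfl
  -- ω is represented by K
  have hωK : ∀ u w : WithLp 2 (H × F), ω u w = ⟪K u, w⟫_ℝ := by
    intro u w
    rw [hω, hωH, hωF, WithLp.prod_inner_apply, hKapp]
    simp only [WithLp.equiv_apply, WithLp.equiv_symm_apply, WithLp.ofLp_toLp]
  -- K is an isometry with K² = -1
  have hKorth : ∀ u w : WithLp 2 (H × F), ⟪K u, K w⟫_ℝ = ⟪u, w⟫_ℝ := by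
    intro u w
    rw [WithLp.prod_inner_apply, WithLp.prod_inner_apply, hKapp, hKapp]
    rw [WithLp.equiv_symm_apply, WithLp.ofLp_toLp, WithLp.ofLp_toLp, hJHorth, hJForth]
    rfl
  have hK2 : ∀ u : WithLp 2 (H × F), K (K u) = -u := by
    intro u
    rw [hKapp, hKapp, Equiv.symm_apply_eq]
    refine Prod.ext ?_ ?_ <;>
      simp [WithLp.equiv_apply, WithLp.equiv_symm_apply, WithLp.ofLp_toLp,
        WithLp.neg_fst, WithLp.neg_snd, hJH2, hJF2]
  -- antisymmetry of ω via K
  have hKskew : ∀ u w : WithLp 2 (H × F), ⟪K w, u⟫_ℝ = -⟪K u, w⟫_ℝ := by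
    intro u w
    calc ⟪K w, u⟫_ℝ = ⟪K (K w), K u⟫_ℝ := (hKorth _ _).symm
      _ = ⟪-w, K u⟫_ℝ := by rw [hK2]
      _ = -⟪K u, w⟫_ℝ := by rw [inner_neg_left, real_inner_comm]
  have hωdiag : ∀ u : WithLp 2 (H × F), ω u u = 0 := by
    intro u
    have := hKskew u u
    rw [hωK]; linarith
  -- antisymmetry of η₀
  have hη₀symm : ∀ x y : H, η₀ y x = -η₀ x y := by
    intro x y
    have h := hη₀alt (x + y)
    simp only [map_add, LinearMap.add_apply, hη₀alt] at h
    linarith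
  -- the Riesz representative of η₀ and the induced map N on V
  set T : H →ₗ[ℝ] H :=
    { toFun := fun w => ∑ i, η₀ (f i) w • f i
      map_add' := by intro x y; simp [add_smul, Finset.sum_add_distrib]
      map_smul' := by intro c x; simp [smul_smul, Finset.smul_sum] } with hTdef
  have hT : ∀ u w : H, ⟪u, T w⟫_ℝ = η₀ u w := by
    intro u w
    have hu : ∑ i, ⟪f i, u⟫_ℝ • f i = u := f.sum_repr' u
    have h1 : ⟪u, T w⟫_ℝ = ∑ i, η₀ (f i) w * ⟪u, f i⟫_ℝ := by
      simp [hTdef, inner_sum, inner_smul_right]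
    have h2 : η₀ u w = ∑ i, ⟪f i, u⟫_ℝ * η₀ (f i) w := by
      conv_lhs => rw [← hu]
      simp [map_sum, LinearMap.sum_apply, LinearMap.smul_apply]
    rw [h1, h2]
    exact Finset.sum_congr rfl fun i _ => by rw [real_inner_comm, mul_comm]
  set N : WithLp 2 (H × F) →ₗ[ℝ] WithLp 2 (H × F) :=
    (WithLp.linearEquiv 2 ℝ (H × F)).symm.toLinearMap ∘ₗ (LinearMap.inl ℝ H F) ∘ₗ T ∘ₗ
      (LinearMap.fst ℝ H F) ∘ₗ (WithLp.linearEquiv 2 ℝ (H × F)).toLinearMap with hNdef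
  have hNapp : ∀ u : WithLp 2 (H × F),
      N u = (WithLp.equiv 2 (H × F)).symm (T (WithLp.equiv 2 (H × F) u).1, 0) := fun u => rfl
  have hηN : ∀ u w : WithLp 2 (H × F), η u w = ⟪u, N w⟫_ℝ := by
    intro u w
    rw [hη, hNapp, WithLp.prod_inner_apply, WithLp.equiv_symm_apply, WithLp.ofLp_toLp]
    rw [inner_zero_right, add_zero, hT]
    rfl
  -- γ kills K ∘ N
  have hγKN : ∀ u : WithLp 2 (H × F), γ (K (N u)) = 0 := by
    intro u
    rw [hNapp, hKapp]
    rw [show (WithLp.equiv 2 (H × F))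
        ((WithLp.equiv 2 (H × F)).symm (T (WithLp.equiv 2 (H × F) u).1, 0)) =
        (T (WithLp.equiv 2 (H × F) u).1, 0) from Equiv.apply_symm_apply _ _]
    simp only [map_zero]
    exact hγ _
  haveI : FiniteDimensional ℝ H := Module.Finite.of_basis f.toBasis
  haveI : FiniteDimensional ℝ (WithLp 2 (H × F)) := Module.Finite.of_basis e.toBasis
  -- Part 2 : the terms involving v in η vanish
  have part2 : ∑ i : Fin 6, ∑ j ∈ Ioi i,
      (ω (e i) (e j) * (η (e i) v * γ (e j)) - ω (e i) (e j) * (η (e j) v * γ (e i))) = 0 := by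
    have key : ∀ i j : Fin 6,
        ω (e i) (e j) * (η (e i) v * γ (e j)) - ω (e i) (e j) * (η (e j) v * γ (e i)) =
        (fun i j => ω (e i) (e j) * (η (e i) v * γ (e j))) i j +
        (fun i j => ω (e i) (e j) * (η (e i) v * γ (e j))) j i := by
      intro i j
      have : ω (e j) (e i) = -ω (e i) (e j) := by rw [hωK, hωK, hKskew]
      simp only [this]; ring
    calc ∑ i : Fin 6, ∑ j ∈ Ioi i,
          (ω (e i) (e j) * (η (e i) v * γ (e j)) - ω (e i) (e j) * (η (e j) v * γ (e i)))
        = ∑ i : Fin 6, ∑ j : Fin 6, ω (e i) (e j) * (η (e i) v * γ (e j)) := by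
          rw [← aux_pair_sum (fun i j => ω (e i) (e j) * (η (e i) v * γ (e j)))
            (fun i => by simp only [hωdiag, zero_mul])]
          exact Finset.sum_congr rfl fun i _ => Finset.sum_congr rfl fun j _ => key i j
      _ = ∑ i : Fin 6, η (e i) v * γ (K (e i)) := by
          refine Finset.sum_congr rfl fun i _ => ?_
          have hrep : ∑ j, ⟪e j, K (e i)⟫_ℝ • e j = K (e i) := e.sum_repr' (K (e i))
          have : γ (K (e i)) = ∑ j, ⟪e j, K (e i)⟫_ℝ * γ (e j) := by
            conv_lhs => rw [← hrep]
            simp [map_sum, map_smul]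
          rw [this, Finset.mul_sum]
          refine Finset.sum_congr rfl fun j _ => ?_
          rw [hωK, real_inner_comm]
          ring
      _ = γ (K (N v)) := by
          have hrep : ∑ i, ⟪e i, N v⟫_ℝ • e i = N v := e.sum_repr' (N v)
          conv_rhs => rw [← hrep]
          rw [map_sum, map_sum]
          refine Finset.sum_congr rfl fun i _ => ?_
          rw [map_smul, map_smul, hηN]
          simp [smul_eq_mul]
      _ = 0 := hγKN v
  -- Part 1 : ⟨ω, η⟩ = 0
  have part1 : ∑ i : Fin 6, ∑ j ∈ Ioi i, ω (e i) (e j) * η (e i) (e j) = 0 := by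
    have key : ∀ i j : Fin 6,
        ω (e i) (e j) * η (e i) (e j) + ω (e j) (e i) * η (e j) (e i) =
        2 * (ω (e i) (e j) * η (e i) (e j)) := by
      intro i j
      have h1 : ω (e j) (e i) = -ω (e i) (e j) := by rw [hωK, hωK, hKskew]
      have h2 : η (e j) (e i) = -η (e i) (e j) := by rw [hη, hη, hη₀symm]
      rw [h1, h2]; ring
    have doubling : ∑ i : Fin 6, ∑ j : Fin 6, ω (e i) (e j) * η (e i) (e j) =
        2 * ∑ i : Fin 6, ∑ j ∈ Ioi i, ω (e i) (e j) * η (e i) (e j) := by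
      rw [← aux_pair_sum (fun i j => ω (e i) (e j) * η (e i) (e j))
        (fun i => by simp only [hωdiag, zero_mul])]
      rw [Finset.mul_sum]
      refine Finset.sum_congr rfl fun i _ => ?_
      rw [Finset.mul_sum]
      exact Finset.sum_congr rfl fun j _ => (key i j).symm ▸ (key i j)
    -- the full sum is a trace
    have htrace : ∑ i : Fin 6, ∑ j : Fin 6, ω (e i) (e j) * η (e i) (e j) =
        LinearMap.trace ℝ (WithLp 2 (H × F)) (N ∘ₗ K) := by
      rw [aux_onb_trace e (N ∘ₗ K)]
      refine Finset.sum_congr rfl fun i _ => ?_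
      have hrep : ∑ j, ⟪K (e i), e j⟫_ℝ • e j = K (e i) := by
        have := e.sum_repr' (K (e i))
        simpa [real_inner_comm] using this
      calc ∑ j, ω (e i) (e j) * η (e i) (e j)
          = ∑ j, ⟪K (e i), e j⟫_ℝ * ⟪e i, N (e j)⟫_ℝ := by
            exact Finset.sum_congr rfl fun j _ => by rw [hωK, hηN]
        _ = ⟪e i, N (K (e i))⟫_ℝ := by
            conv_rhs => rw [← hrep]
            rw [map_sum, inner_sum]
            exact Finset.sum_congr rfl fun j _ => by rw [map_smul, inner_smul_right]
        _ = ⟪e i, (N ∘ₗ K) (e i)⟫_ℝ := rfl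
    -- reduce the trace to H
    have hcomp : N ∘ₗ K =
        ((WithLp.linearEquiv 2 ℝ (H × F)).symm.toLinearMap ∘ₗ (LinearMap.inl ℝ H F) ∘ₗ
          (T ∘ₗ JH)) ∘ₗ
        ((LinearMap.fst ℝ H F) ∘ₗ (WithLp.linearEquiv 2 ℝ (H × F)).toLinearMap) := by
      ext u <;> rfl
    have htr2 : LinearMap.trace ℝ (WithLp 2 (H × F)) (N ∘ₗ K) =
        LinearMap.trace ℝ H (T ∘ₗ JH) := by
      rw [hcomp, LinearMap.trace_comp_comm']
      congr 1
    -- compute the trace over H via the basis f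
    have htr3 : LinearMap.trace ℝ H (T ∘ₗ JH) =
        ∑ i : Fin 4, ∑ j : Fin 4, ⟪JH (f i), f j⟫_ℝ * η₀ (f i) (f j) := by
      rw [aux_onb_trace f (T ∘ₗ JH)]
      refine Finset.sum_congr rfl fun i _ => ?_
      have : (T ∘ₗ JH) (f i) = T (JH (f i)) := rfl
      rw [this, hT]
      have hrep : ∑ j, ⟪f j, JH (f i)⟫_ℝ • f j = JH (f i) := f.sum_repr' (JH (f i))
      conv_lhs => rw [← hrep]
      rw [map_sum]
      refine Finset.sum_congr rfl fun j _ => ?_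
      rw [map_smul, smul_eq_mul, real_inner_comm]
    -- the H-sum doubles hperp
    have hJHskew : ∀ x y : H, ⟪JH y, x⟫_ℝ = -⟪JH x, y⟫_ℝ := by
      intro x y
      calc ⟪JH y, x⟫_ℝ = ⟪JH (JH y), JH x⟫_ℝ := (hJHorth _ _).symm
        _ = ⟪-y, JH x⟫_ℝ := by rw [hJH2]
        _ = -⟪JH x, y⟫_ℝ := by rw [inner_neg_left, real_inner_comm]
    have hHsum : ∑ i : Fin 4, ∑ j : Fin 4, ⟪JH (f i), f j⟫_ℝ * η₀ (f i) (f j) = 0 := by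
      rw [← aux_pair_sum (fun i j => ⟪JH (f i), f j⟫_ℝ * η₀ (f i) (f j))
        (fun i => by simp only [hη₀alt, mul_zero])]
      have : ∀ i j : Fin 4,
          ⟪JH (f i), f j⟫_ℝ * η₀ (f i) (f j) + ⟪JH (f j), f i⟫_ℝ * η₀ (f j) (f i) =
          2 * (⟪JH (f i), f j⟫_ℝ * η₀ (f i) (f j)) := by
        intro i j
        rw [hJHskew, hη₀symm]
        ring
      calc ∑ i : Fin 4, ∑ j ∈ Ioi i,
            (⟪JH (f i), f j⟫_ℝ * η₀ (f i) (f j) + ⟪JH (f j), f i⟫_ℝ * η₀ (f j) (f i))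
          = 2 * ∑ i : Fin 4, ∑ j ∈ Ioi i, ⟪JH (f i), f j⟫_ℝ * η₀ (f i) (f j) := by
            rw [Finset.mul_sum]
            refine Finset.sum_congr rfl fun i _ => ?_
            rw [Finset.mul_sum]
            exact Finset.sum_congr rfl fun j _ => this i j
        _ = 0 := by rw [hperp, mul_zero]
    have := htrace.trans (htr2.trans (htr3.trans hHsum))
    rw [doubling] at this
    linarith
  -- assemble
  calc ∑ i : Fin 6, ∑ j ∈ Ioi i,
        ω (e i) (e j) * (η (e i) (e j) * γ v - η (e i) v * γ (e j) + η (e j) v * γ (e i))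
      = ∑ i : Fin 6, ∑ j ∈ Ioi i,
          (ω (e i) (e j) * η (e i) (e j) * γ v -
            (ω (e i) (e j) * (η (e i) v * γ (e j)) -
              ω (e i) (e j) * (η (e j) v * γ (e i)))) := by
        exact Finset.sum_congr rfl fun i _ => Finset.sum_congr rfl fun j _ => by ring
    _ = (∑ i : Fin 6, ∑ j ∈ Ioi i, ω (e i) (e j) * η (e i) (e j)) * γ v -
        ∑ i : Fin 6, ∑ j ∈ Ioi i,
          (ω (e i) (e j) * (η (e i) v * γ (e j)) - ω (e i) (e j) * (η (e j) v * γ (e i))) := by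
        rw [Finset.sum_mul]
        rw [← Finset.sum_sub_distrib]
        refine Finset.sum_congr rfl fun i _ => ?_
        rw [Finset.sum_mul, ← Finset.sum_sub_distrib]
    _ = 0 := by rw [part1, part2, zero_mul, sub_zero]
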